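/- Let g > 0, h_ℓ, h_r > 0, u_ℓ, u_r ∈ ℝ, and let φ be the shallow water depth function φ(h) = f(h;h_ℓ) + f(h;h_r) + u_r − u_ℓ. Then lim_{h→0⁺} φ(h) = u_r − u_ℓ − 2*sqrt(g*h_ℓ) − 2*sqrt(g*h_r), and φ(h) → +∞ as h → ∞. Consequently, if u_r − u_ℓ < 2*sqrt(g*h_ℓ) + 2*sqrt(g*h_r), then φ has a unique positive root h*. -/

import Mathlib

noncomputable def swWave (g h₀ : ℝ) : ℝ → ℝ := fun h =>
  if h ≤ h₀ then 2 * (Real.sqrt (g * h) - Real.sqrt (g * h₀))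
  else (h - h₀) * Real.sqrt ((g / 2) * (h + h₀) / (h * h₀))

noncomputable def swDepthFun (g hl hr ul ur : ℝ) : ℝ → ℝ := fun h =>
  swWave g hl h + swWave g hr h + ur - ul

open Real Set Filter Topology

lemma swWave_contOn {g h₀ : ℝ} (hg : 0 < g) (hh : 0 < h₀) :
    ContinuousOn (swWave g h₀) (Ioi 0) := by
  have hG : ∀ x : ℝ, x ≠ 0 → ContinuousAt (fun h : ℝ =>
      (h - h₀) * Real.sqrt ((g / 2) * (h + h₀) / (h * h₀))) x := by
    intro x hx
    have hden : (x * h₀) ≠ 0 := mul_ne_zero hx hh.ne'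
    have h1 : ContinuousAt (fun h : ℝ => (g / 2) * (h + h₀) / (h * h₀)) x :=
      ContinuousAt.div (by fun_prop) (by fun_prop) hden
    exact (continuousAt_id.sub continuousAt_const).mul
      (Real.continuous_sqrt.continuousAt.comp h1)
  intro x hx
  simp only [mem_Ioi] at hx
  rcases lt_trichotomy x h₀ with hlt | heq | hgt
  · apply ContinuousAt.continuousWithinAt
    have hF : ContinuousAt (fun h : ℝ => 2 * (Real.sqrt (g * h) - Real.sqrt (g * h₀))) x := by
      fun_prop
    apply hF.congr
    filter_upwards [eventually_lt_nhds hlt] with y hy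
    simp [swWave, hy.le]
  · subst heq
    apply ContinuousAt.continuousWithinAt
    have hval : swWave g x x = 0 := by simp [swWave]
    rw [ContinuousAt, hval]
    have hF : Tendsto (fun h : ℝ => 2 * (Real.sqrt (g * h) - Real.sqrt (g * x)))
        (𝓝 x ⊓ 𝓟 {h : ℝ | h ≤ x}) (𝓝 0) := by
      have : ContinuousAt (fun h : ℝ => 2 * (Real.sqrt (g * h) - Real.sqrt (g * x))) x := by
        fun_prop
      have h0 := this.tendsto
      simp only [sub_self, mul_zero] at h0
      exact h0.mono_left inf_le_left
    have hGx : Tendsto (fun h : ℝ => (h - x) * Real.sqrt ((g / 2) * (h + x) / (h * x)))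
        (𝓝 x ⊓ 𝓟 {h : ℝ | ¬ h ≤ x}) (𝓝 0) := by
      have h0 := (hG x hx.ne').tendsto
      simp only [sub_self, zero_mul] at h0
      exact h0.mono_left inf_le_left
    exact hF.if hGx
  · apply ContinuousAt.continuousWithinAt
    apply (hG x hx.ne').congr
    filter_upwards [eventually_gt_nhds hgt] with y hy
    simp [swWave, not_le.mpr hy]

lemma key_poly {g h₀ a b : ℝ} (hg : 0 < g) (hh : 0 < h₀) (ha : h₀ < a) (hab : a < b) :
    (a - h₀) ^ 2 * ((g / 2) * (a + h₀) / (a * h₀)) <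
    (b - h₀) ^ 2 * ((g / 2) * (b + h₀) / (b * h₀)) := by
  have ha0 : 0 < a := hh.trans ha
  have hb0 : 0 < b := ha0.trans hab
  rw [mul_div_assoc', mul_div_assoc', div_lt_div_iff₀ (by positivity) (by positivity)]
  have h1 : h₀ ^ 2 < a * b := by nlinarith
  have h2 : h₀ < a + b - h₀ := by linarith
  have h3 : h₀ ^ 2 * h₀ < (a * b) * (a + b - h₀) :=
    mul_lt_mul'' h1 h2 (by positivity) hh.le
  have h4 : 0 < (b - a) * ((a * b) * (a + b - h₀) - h₀ ^ 2 * h₀) :=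
    mul_pos (sub_pos.2 hab) (by linarith)
  nlinarith [mul_pos (mul_pos hg hh) h4]

lemma swWave_strictMonoOn {g h₀ : ℝ} (hg : 0 < g) (hh : 0 < h₀) :
    StrictMonoOn (swWave g h₀) (Ioi 0) := by
  have hGpos : ∀ x : ℝ, h₀ < x → 0 < (x - h₀) * Real.sqrt ((g / 2) * (x + h₀) / (x * h₀)) := by
    intro x hx
    have hx0 : 0 < x := hh.trans hx
    exact mul_pos (sub_pos.2 hx) (Real.sqrt_pos.2 (by positivity))
  intro a ha b hb hab
  simp only [mem_Ioi] at ha hb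
  by_cases hbl : b ≤ h₀
  · have hal : a ≤ h₀ := hab.le.trans hbl
    simp only [swWave, if_pos hal, if_pos hbl]
    have : Real.sqrt (g * a) < Real.sqrt (g * b) :=
      Real.sqrt_lt_sqrt (by positivity) (by nlinarith)
    linarith
  · push_neg at hbl
    by_cases hal : a ≤ h₀
    · have h1 : swWave g h₀ a ≤ 0 := by
        simp only [swWave, if_pos hal]
        have : Real.sqrt (g * a) ≤ Real.sqrt (g * h₀) :=
          Real.sqrt_le_sqrt (by nlinarith)
        linarith
      have h2 : 0 < swWave g h₀ b := by
        simp only [swWave, if_neg (not_le.mpr hbl)]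
        exact hGpos b hbl
      linarith
    · push_neg at hal
      simp only [swWave, if_neg (not_le.mpr hal), if_neg (not_le.mpr hbl)]
      have hb' : h₀ < b := hal.trans hab
      apply lt_of_pow_lt_pow_left₀ 2 (hGpos b hb').le
      have e1 : ((a - h₀) * Real.sqrt ((g / 2) * (a + h₀) / (a * h₀))) ^ 2
          = (a - h₀) ^ 2 * ((g / 2) * (a + h₀) / (a * h₀)) := by
        rw [mul_pow, Real.sq_sqrt (by positivity)]
      have e2 : ((b - h₀) * Real.sqrt ((g / 2) * (b + h₀) / (b * h₀))) ^ 2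
          = (b - h₀) ^ 2 * ((g / 2) * (b + h₀) / (b * h₀)) := by
        rw [mul_pow, Real.sq_sqrt (by positivity)]
      rw [e1, e2]
      exact key_poly hg hh hal hab

lemma swWave_atTop {g h₀ : ℝ} (hg : 0 < g) (hh : 0 < h₀) :
    Tendsto (swWave g h₀) atTop atTop := by
  have hc : 0 < Real.sqrt (g / (2 * h₀)) := Real.sqrt_pos.2 (by positivity)
  have hbase : Tendsto (fun h : ℝ => (h - h₀) * Real.sqrt (g / (2 * h₀))) atTop atTop :=
    (tendsto_atTop_add_const_right atTop (-h₀) tendsto_id).atTop_mul_const hc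
  apply tendsto_atTop_mono' atTop _ hbase
  filter_upwards [eventually_gt_atTop h₀] with h hgt
  have hh0 : 0 < h := hh.trans hgt
  have harg : g / (2 * h₀) ≤ (g / 2) * (h + h₀) / (h * h₀) := by
    rw [div_le_div_iff₀ (by positivity) (by positivity)]
    nlinarith [mul_pos hg (mul_pos hh hh)]
  calc (h - h₀) * Real.sqrt (g / (2 * h₀))
      ≤ (h - h₀) * Real.sqrt ((g / 2) * (h + h₀) / (h * h₀)) := by
        apply mul_le_mul_of_nonneg_left (Real.sqrt_le_sqrt harg) (by linarith)
    _ = swWave g h₀ h := by simp [swWave, not_le.mpr hgt]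

lemma swDepth_tendsto_zero (g hl hr ul ur : ℝ) (hg : 0 < g) (hhl : 0 < hl) (hhr : 0 < hr) :
    Tendsto (swDepthFun g hl hr ul ur) (𝓝[>] 0)
      (𝓝 (ur - ul - 2 * Real.sqrt (g * hl) - 2 * Real.sqrt (g * hr))) := by
  have hs : Tendsto (fun h : ℝ => Real.sqrt (g * h)) (𝓝[>] (0:ℝ)) (𝓝 0) := by
    have hc : Continuous (fun h : ℝ => Real.sqrt (g * h)) := by fun_prop
    have := (hc.tendsto 0).mono_left (nhdsWithin_le_nhds (s := Ioi 0))
    simpa using this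
  have hmain : Tendsto (fun h : ℝ =>
      2 * (Real.sqrt (g * h) - Real.sqrt (g * hl)) +
      2 * (Real.sqrt (g * h) - Real.sqrt (g * hr)) + ur - ul) (𝓝[>] (0:ℝ))
      (𝓝 (ur - ul - 2 * Real.sqrt (g * hl) - 2 * Real.sqrt (g * hr))) := by
    have h2 : Tendsto (fun h : ℝ =>
        2 * (Real.sqrt (g * h) - Real.sqrt (g * hl)) +
        2 * (Real.sqrt (g * h) - Real.sqrt (g * hr)) + ur - ul) (𝓝[>] (0:ℝ))
        (𝓝 (2 * ((0:ℝ) - Real.sqrt (g * hl)) + 2 * ((0:ℝ) - Real.sqrt (g * hr)) + ur - ul)) :=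
      ((((hs.sub tendsto_const_nhds).const_mul 2).add
        ((hs.sub tendsto_const_nhds).const_mul 2)).add_const ur).sub_const ul
    convert h2 using 2
    ring
  apply hmain.congr'
  filter_upwards [Ioo_mem_nhdsGT_of_mem (show (0:ℝ) ∈ Ico 0 (min hl hr) by
    simp [lt_min hhl hhr])] with h hh
  obtain ⟨h0, hlt⟩ := hh
  have h1 : h ≤ hl := le_of_lt (lt_of_lt_of_le hlt (min_le_left _ _))
  have h2 : h ≤ hr := le_of_lt (lt_of_lt_of_le hlt (min_le_right _ _))
  simp [swDepthFun, swWave, h1, h2]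

theorem stmt_11 (g hl hr ul ur : ℝ) (hg : 0 < g) (hhl : 0 < hl) (hhr : 0 < hr) :
    Filter.Tendsto (swDepthFun g hl hr ul ur) (nhdsWithin 0 (Set.Ioi 0))
      (nhds (ur - ul - 2 * Real.sqrt (g * hl) - 2 * Real.sqrt (g * hr))) ∧
    Filter.Tendsto (swDepthFun g hl hr ul ur) Filter.atTop Filter.atTop ∧
    (ur - ul < 2 * Real.sqrt (g * hl) + 2 * Real.sqrt (g * hr) →
      ∃! h : ℝ, 0 < h ∧ swDepthFun g hl hr ul ur h = 0) := by
  set φ := swDepthFun g hl hr ul ur with hφ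
  have hzero := swDepth_tendsto_zero g hl hr ul ur hg hhl hhr
  have hatTop : Tendsto φ atTop atTop := by
    have := Tendsto.atTop_add_atTop (swWave_atTop hg hhl) (swWave_atTop hg hhr)
    have h2 := tendsto_atTop_add_const_right atTop (ur - ul) this
    apply h2.congr
    intro h; simp [hφ, swDepthFun]; ring
  refine ⟨hzero, hatTop, fun hcond => ?_⟩
  have hmono : StrictMonoOn φ (Ioi 0) := by
    intro a ha b hb hab
    have h1 := swWave_strictMonoOn hg hhl ha hb hab
    have h2 := swWave_strictMonoOn hg hhr ha hb hab
    simp only [hφ, swDepthFun]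
    linarith
  have hcont : ContinuousOn φ (Ioi 0) := by
    have := ((swWave_contOn hg hhl).add (swWave_contOn hg hhr))
    exact (this.add continuousOn_const).sub continuousOn_const
  have hL : ur - ul - 2 * Real.sqrt (g * hl) - 2 * Real.sqrt (g * hr) < 0 := by linarith
  obtain ⟨a, haneg, ha0⟩ : ∃ a : ℝ, φ a < 0 ∧ 0 < a := by
    have h1 : ∀ᶠ h in 𝓝[>] (0:ℝ), φ h < 0 := hzero.eventually (eventually_lt_nhds hL)
    have h2 : ∀ᶠ h in 𝓝[>] (0:ℝ), 0 < h := eventually_mem_nhdsWithin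
    exact (h1.and h2).exists
  obtain ⟨b, hbpos, hab⟩ : ∃ b : ℝ, 0 < φ b ∧ a ≤ b := by
    have h1 : ∀ᶠ h in atTop, 0 < φ h := hatTop.eventually_gt_atTop 0
    exact (h1.and (eventually_ge_atTop a)).exists
  have hsub : Icc a b ⊆ Ioi 0 := fun x hx => lt_of_lt_of_le ha0 hx.1
  have hivt := intermediate_value_Icc hab (hcont.mono hsub)
  have h0mem : (0:ℝ) ∈ Icc (φ a) (φ b) := ⟨haneg.le, hbpos.le⟩
  obtain ⟨c, hc, hroot⟩ := hivt h0mem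
  have hcpos : 0 < c := lt_of_lt_of_le ha0 hc.1
  refine ⟨c, ⟨hcpos, hroot⟩, ?_⟩
  rintro y ⟨hy0, hyroot⟩
  exact hmono.injOn (mem_Ioi.2 hy0) (mem_Ioi.2 hcpos) (by rw [hyroot, hroot])
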